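/- On any bounded graph class (graphs with at most N nodes), every node classifier computable by an L-layer R²-GNN is equivalent to a FOC2 formula of quantifier depth at most L and parse-tree size at most 2^{2 f(L)}, where f is the tower function defined by f(0) = O(2^{2^{2(m1+m2)}}) and f(k+1) = 2^{2^{2(N+1) f(k)}}. -/

import Mathlib

inductive Var : Type
  | x | y
deriving DecidableEq

structure RGraph (P1 P2 : Type) where
  V : Type
  [fintV : Fintype V]
  [decV : DecidableEq V]
  unary : P1 → V → Prop
  rel : P2 → V → V → Prop
  [decU : ∀ p, DecidablePred (unary p)]
  [decR : ∀ r, DecidableRel (rel r)]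

attribute [instance] RGraph.fintV RGraph.decV RGraph.decU RGraph.decR

inductive FOC2 (P1 P2 : Type) : Type
  | tru : FOC2 P1 P2
  | atom : P1 → Var → FOC2 P1 P2
  | rel : P2 → Var → Var → FOC2 P1 P2
  | and : FOC2 P1 P2 → FOC2 P1 P2 → FOC2 P1 P2
  | or : FOC2 P1 P2 → FOC2 P1 P2 → FOC2 P1 P2
  | not : FOC2 P1 P2 → FOC2 P1 P2
  | exge : ℕ → Var → FOC2 P1 P2 → FOC2 P1 P2

variable {P1 P2 : Type}

/-- Satisfaction of a `FOC2` formula in a multi-relational graph under an assignment. -/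
def RGraph.sat (G : RGraph P1 P2) : (Var → G.V) → FOC2 P1 P2 → Prop
  | _, .tru => True
  | σ, .atom p v => G.unary p (σ v)
  | σ, .rel r u w => G.rel r (σ u) (σ w)
  | σ, .and φ ψ => G.sat σ φ ∧ G.sat σ ψ
  | σ, .or φ ψ => G.sat σ φ ∨ G.sat σ ψ
  | σ, .not φ => ¬ G.sat σ φ
  | σ, .exge n v φ => ∃ S : Finset G.V, S.card = n ∧ ∀ a ∈ S, G.sat (Function.update σ v a) φ

/-- Quantifier depth. -/
def FOC2.depth : FOC2 P1 P2 → ℕ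
  | .tru => 0
  | .atom _ _ => 0
  | .rel _ _ _ => 0
  | .and φ ψ => max φ.depth ψ.depth
  | .or φ ψ => max φ.depth ψ.depth
  | .not φ => φ.depth
  | .exge _ _ φ => φ.depth + 1

/-- All counting thresholds are at most `m`. -/
def FOC2.thresholdsLe (m : ℕ) : FOC2 P1 P2 → Prop
  | .tru => True
  | .atom _ _ => True
  | .rel _ _ _ => True
  | .and φ ψ => φ.thresholdsLe m ∧ ψ.thresholdsLe m
  | .or φ ψ => φ.thresholdsLe m ∧ ψ.thresholdsLe m
  | .not φ => φ.thresholdsLe m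
  | .exge n _ φ => n ≤ m ∧ φ.thresholdsLe m

/-- Free variables. -/
def FOC2.freeVars : FOC2 P1 P2 → Finset Var
  | .tru => ∅
  | .atom _ v => {v}
  | .rel _ u w => {u, w}
  | .and φ ψ => φ.freeVars ∪ ψ.freeVars
  | .or φ ψ => φ.freeVars ∪ ψ.freeVars
  | .not φ => φ.freeVars
  | .exge _ v φ => φ.freeVars \ {v}

/-- Parse-tree size. -/
def FOC2.size : FOC2 P1 P2 → ℕ
  | .tru => 1
  | .atom _ _ => 1
  | .rel _ _ _ => 1
  | .and φ ψ => φ.size + ψ.size + 1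
  | .or φ ψ => φ.size + ψ.size + 1
  | .not φ => φ.size + 1
  | .exge _ _ φ => φ.size + 1

/-- A generic R²-GNN run: per-layer combination functions taking the node's previous
feature, for each relation the multiset of neighbours' features, and the global multiset. -/
def runGNN (G : RGraph P1 P2) {X : Type} (h0 : G.V → X)
    (C : ℕ → X → (P2 → Multiset X) → Multiset X → X) : ℕ → G.V → X
  | 0, v => h0 v
  | i + 1, v =>
    C i (runGNN G h0 C i v)
      (fun r => (Finset.univ.filter (fun u => G.rel r v u)).val.map (runGNN G h0 C i))
      (Finset.univ.val.map (runGNN G h0 C i))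

/-- The tower bound `f`: `f 0 = 1000·2^(2^(2(m1+m2)))`,
`f (k+1) = 2^(2^(2(N+1)·f k))`. -/
def fbound (m1 m2 N : ℕ) : ℕ → ℕ
  | 0 => 1000 * 2 ^ 2 ^ (2 * (m1 + m2))
  | k + 1 => 2 ^ 2 ^ (2 * (N + 1) * fbound m1 m2 N k)

/-! ### Auxiliary machinery -/

def Var.swap : Var → Var
  | .x => .y
  | .y => .x

@[simp] lemma Var.swap_swap (v : Var) : v.swap.swap = v := by cases v <;> rfl

/-- Swap the two variables throughout a formula. -/
def FOC2.swapXY : FOC2 P1 P2 → FOC2 P1 P2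
  | .tru => .tru
  | .atom p v => .atom p v.swap
  | .rel r u w => .rel r u.swap w.swap
  | .and φ ψ => .and φ.swapXY ψ.swapXY
  | .or φ ψ => .or φ.swapXY ψ.swapXY
  | .not φ => .not φ.swapXY
  | .exge n v φ => .exge n v.swap φ.swapXY

lemma FOC2.depth_swapXY (φ : FOC2 P1 P2) : φ.swapXY.depth = φ.depth := by
  induction φ <;> simp [FOC2.swapXY, FOC2.depth, *]

lemma FOC2.size_swapXY (φ : FOC2 P1 P2) : φ.swapXY.size = φ.size := by
  induction φ <;> simp [FOC2.swapXY, FOC2.size, *]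

lemma FOC2.freeVars_swapXY (φ : FOC2 P1 P2) :
    φ.swapXY.freeVars = φ.freeVars.image Var.swap := by
  induction φ with
  | tru => simp [FOC2.swapXY, FOC2.freeVars]
  | atom p v => simp [FOC2.swapXY, FOC2.freeVars]
  | rel r u w => simp [FOC2.swapXY, FOC2.freeVars, Finset.image_insert]
  | and φ ψ ihφ ihψ => simp [FOC2.swapXY, FOC2.freeVars, ihφ, ihψ, Finset.image_union]
  | or φ ψ ihφ ihψ => simp [FOC2.swapXY, FOC2.freeVars, ihφ, ihψ, Finset.image_union]
  | not φ ih => simpa [FOC2.swapXY, FOC2.freeVars] using ih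
  | exge n v φ ih =>
      ext w
      simp [FOC2.swapXY, FOC2.freeVars, ih]
      constructor
      · rintro ⟨⟨u, hu, rfl⟩, hne⟩
        exact ⟨u, ⟨hu, fun h => hne (by rw [h])⟩, rfl⟩
      · rintro ⟨u, ⟨hu, hne⟩, rfl⟩
        exact ⟨⟨u, hu, rfl⟩, fun h => hne (by
          have := congrArg Var.swap h; simpa using this)⟩

lemma RGraph.sat_congr (G : RGraph P1 P2) (φ : FOC2 P1 P2) :
    ∀ σ σ' : Var → G.V, (∀ v ∈ φ.freeVars, σ v = σ' v) → (G.sat σ φ ↔ G.sat σ' φ) := by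
  induction φ with
  | tru => intro σ σ' h; simp [RGraph.sat]
  | atom p v => intro σ σ' h; simp [RGraph.sat, h v (by simp [FOC2.freeVars])]
  | rel r u w =>
      intro σ σ' h
      simp [RGraph.sat, h u (by simp [FOC2.freeVars]), h w (by simp [FOC2.freeVars])]
  | and φ ψ ihφ ihψ =>
      intro σ σ' h
      simp [RGraph.sat,
        ihφ σ σ' (fun v hv => h v (by simp [FOC2.freeVars, hv])),
        ihψ σ σ' (fun v hv => h v (by simp [FOC2.freeVars, hv]))]
  | or φ ψ ihφ ihψ =>
      intro σ σ' h
      simp [RGraph.sat,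
        ihφ σ σ' (fun v hv => h v (by simp [FOC2.freeVars, hv])),
        ihψ σ σ' (fun v hv => h v (by simp [FOC2.freeVars, hv]))]
  | not φ ih =>
      intro σ σ' h
      simp [RGraph.sat, ih σ σ' (fun v hv => h v (by simpa [FOC2.freeVars] using hv))]
  | exge n v φ ih =>
      intro σ σ' h
      have key : ∀ a, G.sat (Function.update σ v a) φ ↔ G.sat (Function.update σ' v a) φ := by
        intro a
        apply ih
        intro w hw
        by_cases hvw : w = v
        · subst hvw; simp
        · simp [Function.update_of_ne hvw]
          exact h w (by simp [FOC2.freeVars, hw, hvw])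
      simp only [RGraph.sat]
      constructor
      · rintro ⟨S, hc, hS⟩; exact ⟨S, hc, fun a ha => (key a).1 (hS a ha)⟩
      · rintro ⟨S, hc, hS⟩; exact ⟨S, hc, fun a ha => (key a).2 (hS a ha)⟩

lemma RGraph.sat_swapXY (G : RGraph P1 P2) (φ : FOC2 P1 P2) :
    ∀ σ : Var → G.V, G.sat σ φ.swapXY ↔ G.sat (σ ∘ Var.swap) φ := by
  induction φ with
  | tru => intro σ; simp [RGraph.sat, FOC2.swapXY]
  | atom p v => intro σ; simp [RGraph.sat, FOC2.swapXY]
  | rel r u w => intro σ; simp [RGraph.sat, FOC2.swapXY]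
  | and φ ψ ihφ ihψ => intro σ; simp [RGraph.sat, FOC2.swapXY, ihφ, ihψ]
  | or φ ψ ihφ ihψ => intro σ; simp [RGraph.sat, FOC2.swapXY, ihφ, ihψ]
  | not φ ih => intro σ; simp [RGraph.sat, FOC2.swapXY, ih]
  | exge n v φ ih =>
      intro σ
      have key : ∀ a, (Function.update σ v.swap a) ∘ Var.swap
          = Function.update (σ ∘ Var.swap) v a := by
        intro a; funext w
        by_cases hw : w = v
        · subst hw; simp
        · have : w.swap ≠ v.swap := fun h => hw (by
            have := congrArg Var.swap h; simpa using this)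
          simp [Function.update_of_ne hw, Function.update_of_ne this, Function.comp]
      simp only [RGraph.sat, FOC2.swapXY]
      constructor
      · rintro ⟨S, hc, hS⟩
        exact ⟨S, hc, fun a ha => by rw [← key a]; exact (ih _).1 (hS a ha)⟩
      · rintro ⟨S, hc, hS⟩
        exact ⟨S, hc, fun a ha => (ih _).2 (by rw [key a]; exact hS a ha)⟩
lemma RGraph.sat_exge_iff (G : RGraph P1 P2) (σ : Var → G.V) (n : ℕ) (v : Var)
    (ψ : FOC2 P1 P2) (Q : G.V → Prop) [DecidablePred Q]
    (h : ∀ a, G.sat (Function.update σ v a) ψ ↔ Q a) :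
    G.sat σ (.exge n v ψ) ↔ n ≤ (Finset.univ.filter Q).card := by
  simp only [RGraph.sat]
  constructor
  · rintro ⟨S, hc, hS⟩
    have : S ⊆ Finset.univ.filter Q := fun a ha =>
      Finset.mem_filter.2 ⟨Finset.mem_univ a, (h a).1 (hS a ha)⟩
    calc n = S.card := hc.symm
    _ ≤ _ := Finset.card_le_card this
  · intro h'
    obtain ⟨S, hsub, hcard⟩ := Finset.exists_subset_card_eq h'
    exact ⟨S, hcard, fun a ha => (h a).2 (Finset.mem_filter.1 (hsub ha)).2⟩

/-- `eqCount n ψ` says there are exactly `n` values of `y` satisfying `ψ`. -/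
def eqCount (n : ℕ) (ψ : FOC2 P1 P2) : FOC2 P1 P2 :=
  (FOC2.exge n .y ψ).and (.not (.exge (n + 1) .y ψ))

lemma RGraph.sat_eqCount (G : RGraph P1 P2) (σ : Var → G.V) (n : ℕ)
    (ψ : FOC2 P1 P2) (Q : G.V → Prop) [DecidablePred Q]
    (h : ∀ a, G.sat (Function.update σ .y a) ψ ↔ Q a) :
    G.sat σ (eqCount n ψ) ↔ (Finset.univ.filter Q).card = n := by
  have h1 := G.sat_exge_iff σ n .y ψ Q h
  have h2 := G.sat_exge_iff σ (n + 1) .y ψ Q h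
  have e : G.sat σ (eqCount n ψ) ↔
      (G.sat σ (.exge n .y ψ) ∧ ¬ G.sat σ (.exge (n + 1) .y ψ)) := Iff.rfl
  rw [e, h1, h2]
  omega

lemma eqCount_depth (n : ℕ) (ψ : FOC2 P1 P2) : (eqCount n ψ).depth = ψ.depth + 1 := by
  simp [eqCount, FOC2.depth]

lemma eqCount_size (n : ℕ) (ψ : FOC2 P1 P2) : (eqCount n ψ).size = 2 * ψ.size + 4 := by
  simp [eqCount, FOC2.size]; ring

lemma eqCount_freeVars (n : ℕ) (ψ : FOC2 P1 P2) :
    (eqCount n ψ).freeVars = ψ.freeVars \ {Var.y} := by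
  simp [eqCount, FOC2.freeVars]

/-- Conjunction of a list of formulas. -/
def bigAnd : List (FOC2 P1 P2) → FOC2 P1 P2
  | [] => .tru
  | a :: l => a.and (bigAnd l)

/-- Disjunction of a list of formulas. -/
def bigOr : List (FOC2 P1 P2) → FOC2 P1 P2
  | [] => .not .tru
  | a :: l => a.or (bigOr l)

lemma RGraph.sat_bigAnd (G : RGraph P1 P2) (σ : Var → G.V) :
    ∀ l : List (FOC2 P1 P2), G.sat σ (bigAnd l) ↔ ∀ ψ ∈ l, G.sat σ ψ
  | [] => by simp [bigAnd, RGraph.sat]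
  | a :: l => by simp [bigAnd, RGraph.sat, G.sat_bigAnd σ l]

lemma RGraph.sat_bigOr (G : RGraph P1 P2) (σ : Var → G.V) :
    ∀ l : List (FOC2 P1 P2), G.sat σ (bigOr l) ↔ ∃ ψ ∈ l, G.sat σ ψ
  | [] => by simp [bigOr, RGraph.sat]
  | a :: l => by simp [bigOr, RGraph.sat, G.sat_bigOr σ l]

lemma bigAnd_depth {d : ℕ} : ∀ l : List (FOC2 P1 P2), (∀ ψ ∈ l, FOC2.depth ψ ≤ d) →
    (bigAnd l).depth ≤ d
  | [] => by simp [bigAnd, FOC2.depth]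
  | a :: l => by
      intro h
      simp only [bigAnd, FOC2.depth, max_le_iff]
      exact ⟨h a (by simp), bigAnd_depth l (fun ψ hψ => h ψ (by simp [hψ]))⟩

lemma bigOr_depth {d : ℕ} : ∀ l : List (FOC2 P1 P2), (∀ ψ ∈ l, FOC2.depth ψ ≤ d) →
    (bigOr l).depth ≤ d
  | [] => by simp [bigOr, FOC2.depth]
  | a :: l => by
      intro h
      simp only [bigOr, FOC2.depth, max_le_iff]
      exact ⟨h a (by simp), bigOr_depth l (fun ψ hψ => h ψ (by simp [hψ]))⟩

lemma bigAnd_size {s : ℕ} : ∀ l : List (FOC2 P1 P2), (∀ ψ ∈ l, FOC2.size ψ ≤ s) →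
    (bigAnd l).size ≤ l.length * (s + 1) + 1
  | [] => by simp [bigAnd, FOC2.size]
  | a :: l => by
      intro h
      have h1 := h a (by simp)
      have h2 := bigAnd_size l (fun ψ hψ => h ψ (by simp [hψ]))
      simp only [bigAnd, FOC2.size, List.length_cons]
      calc a.size + (bigAnd l).size + 1 ≤ s + (l.length * (s + 1) + 1) + 1 := by omega
      _ = (l.length + 1) * (s + 1) + 1 := by ring

lemma bigOr_size {s : ℕ} : ∀ l : List (FOC2 P1 P2), (∀ ψ ∈ l, FOC2.size ψ ≤ s) →
    (bigOr l).size ≤ l.length * (s + 1) + 2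
  | [] => by simp [bigOr, FOC2.size]
  | a :: l => by
      intro h
      have h1 := h a (by simp)
      have h2 := bigOr_size l (fun ψ hψ => h ψ (by simp [hψ]))
      simp only [bigOr, FOC2.size, List.length_cons]
      calc a.size + (bigOr l).size + 1 ≤ s + (l.length * (s + 1) + 2) + 1 := by omega
      _ = (l.length + 1) * (s + 1) + 2 := by ring

lemma bigAnd_freeVars : ∀ l : List (FOC2 P1 P2), (∀ ψ ∈ l, FOC2.freeVars ψ ⊆ {Var.x}) →
    (bigAnd l).freeVars ⊆ {Var.x}
  | [] => by simp [bigAnd, FOC2.freeVars]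
  | a :: l => by
      intro h
      simp only [bigAnd, FOC2.freeVars, Finset.union_subset_iff]
      exact ⟨h a (by simp), bigAnd_freeVars l (fun ψ hψ => h ψ (by simp [hψ]))⟩

lemma bigOr_freeVars : ∀ l : List (FOC2 P1 P2), (∀ ψ ∈ l, FOC2.freeVars ψ ⊆ {Var.x}) →
    (bigOr l).freeVars ⊆ {Var.x}
  | [] => by simp [bigOr, FOC2.freeVars]
  | a :: l => by
      intro h
      simp only [bigOr, FOC2.freeVars, Finset.union_subset_iff]
      exact ⟨h a (by simp), bigOr_freeVars l (fun ψ hψ => h ψ (by simp [hψ]))⟩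

lemma map_eq_sum_replicate {V T X : Type} [DecidableEq V] [Fintype T] [DecidableEq T]
    (S : Finset V) (g : V → T) (F : T → X) :
    S.val.map (fun v => F (g v)) =
      ∑ t ∈ Finset.univ, Multiset.replicate (S.filter (fun v => g v = t)).card (F t) := by
  induction S using Finset.induction_on with
  | empty => simp
  | @insert a S ha ih =>
      rw [Finset.insert_val_of_notMem ha, Multiset.map_cons, ih]
      have : ∀ t, (Finset.filter (fun v => g v = t) (insert a S)).card
          = (Finset.filter (fun v => g v = t) S).card + (if g a = t then 1 else 0) := by
        intro t
        rw [Finset.filter_insert]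
        split_ifs with h
        · rw [Finset.card_insert_of_notMem (fun hm => ha (Finset.mem_filter.1 hm).1)]
        · rfl
      simp_rw [this, Multiset.replicate_add, Finset.sum_add_distrib]
      have : ∑ t ∈ Finset.univ, Multiset.replicate (if g a = t then 1 else 0) (F t)
          = {F (g a)} := by
        rw [Finset.sum_eq_single (g a)]
        · simp
        · intro b _ hb; rw [if_neg (Ne.symm hb)]; simp
        · intro h; exact absurd (Finset.mem_univ _) h
      rw [this]
      rw [add_comm]
      rfl
lemma le_two_pow_self (n : ℕ) : n ≤ 2 ^ n := (Nat.lt_two_pow_self (n := n)).le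

lemma cube_le_two_pow {n : ℕ} (hn : 10 ≤ n) : n ^ 3 ≤ 2 ^ n := by
  induction n, hn using Nat.le_induction with
  | base => norm_num
  | succ n hn ih =>
      have h1 : (n + 1) ^ 3 ≤ 2 * n ^ 3 := by nlinarith [sq_nonneg n, hn]
      calc (n + 1) ^ 3 ≤ 2 * n ^ 3 := h1
      _ ≤ 2 * 2 ^ n := by omega
      _ = 2 ^ (n + 1) := by ring

lemma fbound_zero_ge (m1 m2 N : ℕ) : 1000 * (m1 + m2 + 1) ≤ fbound m1 m2 N 0 := by
  have h1 : m1 + m2 + 1 ≤ 2 ^ (2 * (m1 + m2)) := by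
    calc m1 + m2 + 1 ≤ 2 * (m1 + m2) + 1 := by omega
    _ ≤ 2 ^ (2 * (m1 + m2)) := Nat.lt_two_pow_self (n := _)
  have h2 : 2 ^ (2 * (m1 + m2)) ≤ 2 ^ 2 ^ (2 * (m1 + m2)) :=
    Nat.pow_le_pow_right (by norm_num) (le_two_pow_self _)
  calc 1000 * (m1 + m2 + 1) ≤ 1000 * 2 ^ 2 ^ (2 * (m1 + m2)) := by
        exact Nat.mul_le_mul_left _ (h1.trans h2)
  _ = fbound m1 m2 N 0 := rfl

lemma fbound_mono_le (m1 m2 N i : ℕ) : fbound m1 m2 N i ≤ fbound m1 m2 N (i + 1) := by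
  have h : fbound m1 m2 N i ≤ 2 ^ (2 * (N + 1) * fbound m1 m2 N i) := by
    calc fbound m1 m2 N i ≤ 2 * (N + 1) * fbound m1 m2 N i := by nlinarith
    _ ≤ 2 ^ (2 * (N + 1) * fbound m1 m2 N i) := le_two_pow_self _
  calc fbound m1 m2 N i ≤ 2 ^ (2 * (N + 1) * fbound m1 m2 N i) := h
  _ ≤ 2 ^ 2 ^ (2 * (N + 1) * fbound m1 m2 N i) :=
      Nat.pow_le_pow_right (by norm_num) (le_two_pow_self _)
  _ = fbound m1 m2 N (i + 1) := rfl

lemma fbound_zero_le (m1 m2 N i : ℕ) : fbound m1 m2 N 0 ≤ fbound m1 m2 N i := by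
  induction i with
  | zero => exact le_refl _
  | succ i ih => exact ih.trans (fbound_mono_le m1 m2 N i)

lemma fbound_ge (m1 m2 N i : ℕ) : 1000 * (m1 + m2 + 1) ≤ fbound m1 m2 N i :=
  (fbound_zero_ge m1 m2 N).trans (fbound_zero_le m1 m2 N i)

lemma sdiff_y_subset (s : Finset Var) : s \ {Var.y} ⊆ {Var.x} := by
  intro v hv
  cases v
  · simp
  · simp at hv
lemma main_induction {P1 P2 : Type} [Fintype P1] [Fintype P2] (N : ℕ) (X : Type)
    (ι : (P1 → Bool) → X) (C : ℕ → X → (P2 → Multiset X) → Multiset X → X) (i : ℕ) :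
    ∃ (T : Type) (fT : Fintype T) (_ : DecidableEq T)
      (χ : T → FOC2 P1 P2) (F : T → X) (τ : ∀ G : RGraph P1 P2, G.V → T),
      (@Fintype.card T fT ≤ fbound (Fintype.card P1) (Fintype.card P2) N i) ∧
      (∀ t, (χ t).depth ≤ i ∧ (χ t).freeVars ⊆ {Var.x} ∧
        (χ t).size ≤ fbound (Fintype.card P1) (Fintype.card P2) N i) ∧
      (∀ G : RGraph P1 P2, Fintype.card G.V ≤ N → ∀ v : G.V,
        runGNN G (fun u => ι (fun p => decide (G.unary p u))) C i v = F (τ G v)) ∧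
      (∀ G : RGraph P1 P2, Fintype.card G.V ≤ N → ∀ v : G.V, ∀ t : T,
        (G.sat (fun _ => v) (χ t) ↔ τ G v = t)) := by
  classical
  set m1 := Fintype.card P1 with hm1
  set m2 := Fintype.card P2 with hm2
  induction i with
  | zero =>
      refine ⟨P1 → Bool, inferInstance, inferInstance,
        fun t => bigAnd ((Finset.univ.toList (α := P1)).map
          (fun p => if t p then FOC2.atom p .x else .not (.atom p .x))),
        ι, fun G v p => decide (G.unary p v), ?_, ?_, ?_, ?_⟩
      · have h1 : @Fintype.card (P1 → Bool) _ = 2 ^ m1 := by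
          simp [Fintype.card_fun, hm1]
        rw [h1]
        have h2 : m1 ≤ 2 ^ (2 * (m1 + m2)) := by
          calc m1 ≤ 2 * (m1 + m2) := by omega
          _ ≤ 2 ^ (2 * (m1 + m2)) := le_two_pow_self _
        calc (2 : ℕ) ^ m1 ≤ 2 ^ 2 ^ (2 * (m1 + m2)) :=
              Nat.pow_le_pow_right (by norm_num) h2
        _ ≤ 1000 * 2 ^ 2 ^ (2 * (m1 + m2)) := by omega
        _ = fbound m1 m2 N 0 := rfl
      · intro t
        refine ⟨bigAnd_depth _ ?_, bigAnd_freeVars _ ?_, ?_⟩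
        · intro ψ hψ
          simp only [List.mem_map] at hψ
          obtain ⟨p, _, rfl⟩ := hψ
          split_ifs <;> simp [FOC2.depth]
        · intro ψ hψ
          simp only [List.mem_map] at hψ
          obtain ⟨p, _, rfl⟩ := hψ
          split_ifs <;> simp [FOC2.freeVars]
        · have hlen : ((Finset.univ.toList (α := P1)).map
              (fun p => (if t p then FOC2.atom p .x else .not (.atom p .x) : FOC2 P1 P2))).length = m1 := by
            simp [Finset.length_toList, hm1]
          have := bigAnd_size (s := 2) ((Finset.univ.toList (α := P1)).map
              (fun p => (if t p then FOC2.atom p .x else .not (.atom p .x) : FOC2 P1 P2))) ?_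
          · rw [hlen] at this
            refine this.trans ?_
            have := fbound_zero_ge m1 m2 N
            omega
          · intro ψ hψ
            simp only [List.mem_map] at hψ
            obtain ⟨p, _, rfl⟩ := hψ
            split_ifs <;> simp [FOC2.size]
      · intro G hG v
        rfl
      · intro G hG v t
        rw [RGraph.sat_bigAnd]
        have key : ∀ p, G.sat (fun _ => v)
            (if t p then FOC2.atom p .x else .not (.atom p .x)) ↔
              decide (G.unary p v) = t p := by
          intro p
          cases h : t p <;> simp [RGraph.sat, h]
        constructor
        · intro h
          funext p
          show decide (G.unary p v) = t p
          rw [← key p]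
          exact h _ (List.mem_map.2 ⟨p, by simp, rfl⟩)
        · intro h ψ hψ
          simp only [List.mem_map] at hψ
          obtain ⟨p, _, rfl⟩ := hψ
          rw [key p]
          exact congrFun h p
  | succ i IH =>
      obtain ⟨T, fT, dT, χ, F, τ, hcard, hform, hval, hsat⟩ := IH
      set A := fbound m1 m2 N i with hA
      have hA1000 : 1000 * (m1 + m2 + 1) ≤ A := fbound_ge m1 m2 N i
      refine ⟨T × (P2 → T → Fin (N + 1)) × (T → Fin (N + 1)),
        inferInstance, inferInstance,
        fun w => (χ w.1).and ((bigAnd ((Finset.univ.toList (α := P2 × T)).map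
            (fun p => eqCount (w.2.1 p.1 p.2 : ℕ)
              ((FOC2.rel p.1 .x .y).and (χ p.2).swapXY)))).and
          (bigAnd ((Finset.univ.toList (α := T)).map
            (fun t => eqCount (w.2.2 t : ℕ) (χ t).swapXY)))),
        fun w => C i (F w.1)
          (fun r => ∑ t ∈ Finset.univ, Multiset.replicate ((w.2.1 r t : ℕ)) (F t))
          (∑ t ∈ Finset.univ, Multiset.replicate ((w.2.2 t : ℕ)) (F t)),
        fun G v => (τ G v,
          fun r t => ⟨min ((Finset.univ.filter
            (fun u => G.rel r v u ∧ τ G u = t)).card) N, by omega⟩,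
          fun t => ⟨min ((Finset.univ.filter (fun u => τ G u = t)).card) N, by omega⟩),
        ?_, ?_, ?_, ?_⟩
      · -- cardinality bound
        have hk : Fintype.card T ≤ A := hcard
        have hN2 : N + 1 ≤ 2 ^ N := Nat.lt_two_pow_self (n := N)
        have hm2A : m2 + 2 ≤ A := by omega
        have hA1 : 1 ≤ A := by omega
        set k := Fintype.card T with hkdef
        have hc : Fintype.card (T × (P2 → T → Fin (N + 1)) × (T → Fin (N + 1)))
            = k * (N + 1) ^ (k * m2 + k) := by
          simp only [Fintype.card_prod, Fintype.card_fun, Fintype.card_fin]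
          rw [← pow_mul, ← pow_add]
        rw [hc]
        have hexp : A + N * (k * m2 + k) ≤ 2 ^ (2 * (N + 1) * A) := by
          have h1 : A + N * (k * m2 + k) ≤ A * (N + 1) * (m2 + 1) := by
            have l1 : k * (N * m2) ≤ A * (N * m2) := Nat.mul_le_mul_right _ hk
            have l2 : k * N ≤ A * N := Nat.mul_le_mul_right _ hk
            nlinarith [l1, l2]
          have h2 : A * (N + 1) * (m2 + 1) ≤ 2 ^ A * 2 ^ (N + 1) * 2 ^ (m2 + 1) :=
            Nat.mul_le_mul (Nat.mul_le_mul (le_two_pow_self A) (le_two_pow_self (N + 1)))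
              (le_two_pow_self (m2 + 1))
          have h3 : 2 ^ A * 2 ^ (N + 1) * 2 ^ (m2 + 1) = 2 ^ (A + (N + 1) + (m2 + 1)) := by
            rw [← pow_add, ← pow_add]
          have h4 : A + (N + 1) + (m2 + 1) ≤ 2 * (N + 1) * A := by
            have l3 : N * 1 ≤ N * A := Nat.mul_le_mul_left _ hA1
            nlinarith [l3]
          calc A + N * (k * m2 + k) ≤ 2 ^ A * 2 ^ (N + 1) * 2 ^ (m2 + 1) := h1.trans h2
          _ = 2 ^ (A + (N + 1) + (m2 + 1)) := h3
          _ ≤ 2 ^ (2 * (N + 1) * A) := Nat.pow_le_pow_right (by norm_num) h4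
        calc k * (N + 1) ^ (k * m2 + k)
            ≤ 2 ^ A * (2 ^ N) ^ (k * m2 + k) :=
              Nat.mul_le_mul (hk.trans (le_two_pow_self A)) (Nat.pow_le_pow_left hN2 _)
        _ = 2 ^ (A + N * (k * m2 + k)) := by rw [← pow_mul, ← pow_add]
        _ ≤ 2 ^ 2 ^ (2 * (N + 1) * A) := Nat.pow_le_pow_right (by norm_num) hexp
        _ = fbound m1 m2 N (i + 1) := rfl
      · -- formula bounds
        intro w
        have hk : Fintype.card T ≤ A := hcard
        have hA1 : 1 ≤ A := by omega
        have hm2A : m2 ≤ A := by omega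
        refine ⟨?_, ?_, ?_⟩
        · simp only [FOC2.depth, max_le_iff]
          refine ⟨(hform w.1).1.trans (by omega), bigAnd_depth _ ?_, bigAnd_depth _ ?_⟩
          · intro ψ hψ
            obtain ⟨p, _, rfl⟩ := List.mem_map.1 hψ
            rw [eqCount_depth]
            simp only [FOC2.depth, FOC2.depth_swapXY]
            have := (hform p.2).1
            omega
          · intro ψ hψ
            obtain ⟨t', _, rfl⟩ := List.mem_map.1 hψ
            rw [eqCount_depth, FOC2.depth_swapXY]
            have := (hform t').1
            omega
        · simp only [FOC2.freeVars]
          refine Finset.union_subset ((hform w.1).2.1)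
            (Finset.union_subset (bigAnd_freeVars _ ?_) (bigAnd_freeVars _ ?_))
          · intro ψ hψ
            obtain ⟨p, _, rfl⟩ := List.mem_map.1 hψ
            rw [eqCount_freeVars]
            exact sdiff_y_subset _
          · intro ψ hψ
            obtain ⟨t', _, rfl⟩ := List.mem_map.1 hψ
            rw [eqCount_freeVars]
            exact sdiff_y_subset _
        · set l1 : List (FOC2 P1 P2) := (Finset.univ.toList (α := P2 × T)).map
              (fun p => eqCount (w.2.1 p.1 p.2 : ℕ)
                ((FOC2.rel p.1 .x .y).and (χ p.2).swapXY)) with hl1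
          set l2 : List (FOC2 P1 P2) := (Finset.univ.toList (α := T)).map
              (fun t => eqCount (w.2.2 t : ℕ) (χ t).swapXY) with hl2
          have hlen1 : l1.length = m2 * Fintype.card T := by
            rw [hl1, List.length_map, Finset.length_toList, Finset.card_univ,
              Fintype.card_prod]
          have hlen2 : l2.length = Fintype.card T := by
            rw [hl2, List.length_map, Finset.length_toList, Finset.card_univ]
          have hs1 : (bigAnd l1).size ≤ (m2 * Fintype.card T) * (2 * A + 9) + 1 := by
            have hb := bigAnd_size (s := 2 * A + 8) l1 (fun ψ hψ => by
              rw [hl1] at hψ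
              obtain ⟨p, _, rfl⟩ := List.mem_map.1 hψ
              rw [eqCount_size]
              simp only [FOC2.size, FOC2.size_swapXY]
              have := (hform p.2).2.2
              omega)
            rw [hlen1] at hb
            have e9 : 2 * A + 8 + 1 = 2 * A + 9 := by omega
            rw [e9] at hb
            exact hb
          have hs2 : (bigAnd l2).size ≤ Fintype.card T * (2 * A + 5) + 1 := by
            have hb := bigAnd_size (s := 2 * A + 4) l2 (fun ψ hψ => by
              rw [hl2] at hψ
              obtain ⟨t', _, rfl⟩ := List.mem_map.1 hψ
              rw [eqCount_size, FOC2.size_swapXY]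
              have := (hform t').2.2
              omega)
            rw [hlen2] at hb
            have e5 : 2 * A + 4 + 1 = 2 * A + 5 := by omega
            rw [e5] at hb
            exact hb
          have hχ : (χ w.1).size ≤ A := (hform w.1).2.2
          have htot : (FOC2.size ((χ w.1).and ((bigAnd l1).and (bigAnd l2))))
              ≤ 23 * A ^ 3 := by
            simp only [FOC2.size]
            have h1 : m2 * Fintype.card T ≤ A * A := Nat.mul_le_mul hm2A hk
            have h2 : (m2 * Fintype.card T) * (2 * A + 9) ≤ (A * A) * (2 * A + 9) :=
              Nat.mul_le_mul_right _ h1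
            have h3 : Fintype.card T * (2 * A + 5) ≤ A * (2 * A + 5) :=
              Nat.mul_le_mul_right _ hk
            nlinarith [hs1, hs2, hχ, h2, h3, hA1]
          refine htot.trans ?_
          have hA10 : 10 ≤ A := by omega
          have h23 : 23 ≤ 2 ^ A := le_trans (by omega) (le_two_pow_self A)
          calc 23 * A ^ 3 ≤ 2 ^ A * 2 ^ A := Nat.mul_le_mul h23 (cube_le_two_pow hA10)
          _ = 2 ^ (A + A) := by rw [← pow_add]
          _ ≤ 2 ^ (2 * (N + 1) * A) := Nat.pow_le_pow_right (by norm_num) (by nlinarith)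
          _ ≤ 2 ^ 2 ^ (2 * (N + 1) * A) :=
              Nat.pow_le_pow_right (by norm_num) (le_two_pow_self _)
          _ = fbound m1 m2 N (i + 1) := rfl
      · -- value equation
        intro G hG v
        have hrun : ∀ u : G.V,
            runGNN G (fun u => ι (fun p => decide (G.unary p u))) C i u = F (τ G u) :=
          hval G hG
        have hcle : ∀ s : Finset G.V, s.card ≤ N := fun s =>
          (Finset.card_le_univ s).trans (by simpa using hG)
        have e2 : ∀ r : P2,
            (Finset.univ.filter (fun u => G.rel r v u)).val.map
              (runGNN G (fun u => ι (fun p => decide (G.unary p u))) C i)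
            = ∑ t ∈ Finset.univ, Multiset.replicate
                (min ((Finset.univ.filter (fun u => G.rel r v u ∧ τ G u = t)).card) N)
                (F t) := by
          intro r
          rw [Multiset.map_congr rfl (fun u _ => hrun u),
            map_eq_sum_replicate _ (τ G) F]
          refine Finset.sum_congr rfl (fun t _ => ?_)
          rw [Finset.filter_filter]
          rw [min_eq_left (hcle _)]
        have e3 : (Finset.univ : Finset G.V).val.map
              (runGNN G (fun u => ι (fun p => decide (G.unary p u))) C i)
            = ∑ t ∈ Finset.univ, Multiset.replicate
                (min ((Finset.univ.filter (fun u => τ G u = t)).card) N) (F t) := by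
          rw [Multiset.map_congr rfl (fun u _ => hrun u),
            map_eq_sum_replicate _ (τ G) F]
          refine Finset.sum_congr rfl (fun t _ => ?_)
          rw [min_eq_left (hcle _)]
        show C i _ _ _ = C i _ _ _
        rw [hrun v, funext e2, e3]
      · -- satisfaction characterisation
        intro G hG v w
        obtain ⟨t, cr, cg⟩ := w
        have hcle : ∀ s : Finset G.V, s.card ≤ N := fun s =>
          (Finset.card_le_univ s).trans (by simpa using hG)
        have hQg : ∀ (t' : T) (a : G.V),
            G.sat (Function.update (fun _ => v) Var.y a) ((χ t').swapXY) ↔ τ G a = t' := by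
          intro t' a
          rw [RGraph.sat_swapXY]
          rw [G.sat_congr (χ t') ((Function.update (fun _ => v) Var.y a) ∘ Var.swap)
            (fun _ => a) ?_]
          · exact hsat G hG a t'
          · intro u hu
            have hx : u = Var.x := by
              have := (hform t').2.1 hu
              simpa using this
            subst hx
            simp [Function.comp, Var.swap, Function.update]
        have hQr : ∀ (r : P2) (t' : T) (a : G.V),
            G.sat (Function.update (fun _ => v) Var.y a)
              ((FOC2.rel r .x .y).and (χ t').swapXY) ↔ (G.rel r v a ∧ τ G a = t') := by
          intro r t' a
          have h1 : G.sat (Function.update (fun _ => v) Var.y a) (FOC2.rel r .x .y)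
              ↔ G.rel r v a := by
            show G.rel r (Function.update (fun _ => v) Var.y a Var.x)
              (Function.update (fun _ => v) Var.y a Var.y) ↔ _
            simp [Function.update]
          exact and_congr h1 (hQg t' a)
        constructor
        · rintro ⟨h1, h2, h3⟩
          have ht : τ G v = t := (hsat G hG v t).1 h1
          have hcr : ∀ (r : P2) (t' : T),
              (Finset.univ.filter (fun u => G.rel r v u ∧ τ G u = t')).card
                = (cr r t' : ℕ) := by
            intro r t'
            have hm := (G.sat_bigAnd (fun _ => v) _).1 h2 _
              (List.mem_map.2 ⟨(r, t'), by simp, rfl⟩)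
            exact (RGraph.sat_eqCount G (fun _ => v) (cr r t' : ℕ)
              ((FOC2.rel r .x .y).and (χ t').swapXY)
              (fun a => G.rel r v a ∧ τ G a = t') (hQr r t')).1 hm
          have hcg : ∀ t' : T,
              (Finset.univ.filter (fun u => τ G u = t')).card = (cg t' : ℕ) := by
            intro t'
            have hm := (G.sat_bigAnd (fun _ => v) _).1 h3 _
              (List.mem_map.2 ⟨t', by simp, rfl⟩)
            exact (RGraph.sat_eqCount G (fun _ => v) (cg t' : ℕ) ((χ t').swapXY)
              (fun a => τ G a = t') (hQg t')).1 hm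
          refine Prod.ext_iff.2 ⟨ht, Prod.ext_iff.2 ⟨?_, ?_⟩⟩
          · funext r t'
            apply Fin.eq_of_val_eq
            show min ((Finset.univ.filter (fun u => G.rel r v u ∧ τ G u = t')).card) N
              = (cr r t' : ℕ)
            rw [min_eq_left (hcle _), hcr r t']
          · funext t'
            apply Fin.eq_of_val_eq
            show min ((Finset.univ.filter (fun u => τ G u = t')).card) N = (cg t' : ℕ)
            rw [min_eq_left (hcle _), hcg t']
        · intro h
          have ht : τ G v = t := congrArg Prod.fst h
          have hcrf := congrArg (fun z => z.2.1) h
          have hcgf := congrArg (fun z => z.2.2) h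
          refine ⟨(hsat G hG v t).2 ht, ?_, ?_⟩
          · rw [G.sat_bigAnd]
            intro ψ hψ
            obtain ⟨p, _, rfl⟩ := List.mem_map.1 hψ
            have hv1 := congrArg Fin.val (congrFun (congrFun hcrf p.1) p.2)
            have hv2 : min ((Finset.univ.filter
                (fun u => G.rel p.1 v u ∧ τ G u = p.2)).card) N = (cr p.1 p.2 : ℕ) := hv1
            rw [min_eq_left (hcle _)] at hv2
            exact (RGraph.sat_eqCount G (fun _ => v) (cr p.1 p.2 : ℕ)
              ((FOC2.rel p.1 .x .y).and (χ p.2).swapXY)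
              (fun a => G.rel p.1 v a ∧ τ G a = p.2) (hQr p.1 p.2)).2 hv2
          · rw [G.sat_bigAnd]
            intro ψ hψ
            obtain ⟨t', _, rfl⟩ := List.mem_map.1 hψ
            have hv1 := congrArg Fin.val (congrFun hcgf t')
            have hv2 : min ((Finset.univ.filter (fun u => τ G u = t')).card) N
                = (cg t' : ℕ) := hv1
            rw [min_eq_left (hcle _)] at hv2
            exact (RGraph.sat_eqCount G (fun _ => v) (cg t' : ℕ) ((χ t').swapXY)
              (fun a => τ G a = t') (hQg t')).2 hv2
/-- On graphs with at most `N` nodes, every node classifier computed by an `L`-layer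
R²-GNN is equivalent to a `FOC2` formula of quantifier depth at most `L` and parse-tree
size at most `2^(2·f L)`. -/
theorem stmt15 {P1 P2 : Type} [Fintype P1] [Fintype P2] (N L : ℕ)
    (X : Type) (ι : (P1 → Bool) → X)
    (C : ℕ → X → (P2 → Multiset X) → Multiset X → X) (out : X → Prop) :
    ∃ φ : FOC2 P1 P2, φ.freeVars ⊆ {Var.x} ∧ φ.depth ≤ L ∧
      φ.size ≤ 2 ^ (2 * fbound (Fintype.card P1) (Fintype.card P2) N L) ∧
      ∀ G : RGraph P1 P2, Fintype.card G.V ≤ N → ∀ v : G.V,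
        (out (runGNN G (fun u => ι (fun p => decide (G.unary p u))) C L v) ↔
          G.sat (fun _ => v) φ) := by
  classical
  obtain ⟨T, fT, dT, χ, F, τ, hcard, hform, hval, hsat⟩ := main_induction N X ι C L
  set Fb := fbound (Fintype.card P1) (Fintype.card P2) N L with hFb
  have hFb1000 : 1000 * (Fintype.card P1 + Fintype.card P2 + 1) ≤ Fb :=
    fbound_ge _ _ _ _
  have hFb1 : 1 ≤ Fb := by omega
  letI := fT
  letI := dT
  set acc : Finset T := Finset.univ.filter (fun t => out (F t)) with hacc
  refine ⟨bigOr (acc.toList.map χ), ?_, ?_, ?_, ?_⟩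
  · exact bigOr_freeVars _ (fun ψ hψ => by
      obtain ⟨t, _, rfl⟩ := List.mem_map.1 hψ
      exact (hform t).2.1)
  · exact bigOr_depth _ (fun ψ hψ => by
      obtain ⟨t, _, rfl⟩ := List.mem_map.1 hψ
      exact (hform t).1)
  · have hlen : (acc.toList.map χ).length ≤ Fb := by
      rw [List.length_map, Finset.length_toList]
      exact (Finset.card_le_univ _).trans (by simpa using hcard)
    have hb := bigOr_size (s := Fb) (acc.toList.map χ) (fun ψ hψ => by
      obtain ⟨t, _, rfl⟩ := List.mem_map.1 hψ
      exact (hform t).2.2)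
    have h1 : (acc.toList.map χ).length * (Fb + 1) + 2 ≤ (Fb + 1) * (Fb + 1) := by
      have := Nat.mul_le_mul_right (Fb + 1) hlen
      nlinarith [hFb1]
    have h2 : (Fb + 1) * (Fb + 1) ≤ 2 ^ Fb * 2 ^ Fb :=
      Nat.mul_le_mul (Nat.lt_two_pow_self (n := Fb)) (Nat.lt_two_pow_self (n := Fb))
    calc (bigOr (acc.toList.map χ)).size
        ≤ (acc.toList.map χ).length * (Fb + 1) + 2 := hb
    _ ≤ (Fb + 1) * (Fb + 1) := h1
    _ ≤ 2 ^ Fb * 2 ^ Fb := h2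
    _ = 2 ^ (Fb + Fb) := by rw [← pow_add]
    _ = 2 ^ (2 * Fb) := by ring_nf
  · intro G hG v
    rw [hval G hG v, G.sat_bigOr]
    constructor
    · intro h
      refine ⟨χ (τ G v), List.mem_map.2 ⟨τ G v, ?_, rfl⟩, (hsat G hG v _).2 rfl⟩
      rw [Finset.mem_toList, hacc, Finset.mem_filter]
      exact ⟨Finset.mem_univ _, h⟩
    · rintro ⟨ψ, hm, hs⟩
      obtain ⟨t, hta, rfl⟩ := List.mem_map.1 hm
      rw [Finset.mem_toList, hacc, Finset.mem_filter] at hta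
      have := (hsat G hG v t).1 hs
      rw [this]
      exact hta.2
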